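/- Let a, b, c be real numbers with 0 < a < b < c, and let u > 0. Then ((c−b)/(b−a)) · e^{−(c−a)u} ≤ (e^{−bu} − e^{−cu}) / (e^{−au} − e^{−bu}) ≤ (c−b)/(b−a). -/
import Mathlib

lemma exp_diff_bounds (s t u : ℝ) (hst : s < t) (hu : 0 < u) :
    u * Real.exp (-t*u) * (t-s) ≤ Real.exp (-s*u) - Real.exp (-t*u) ∧
    Real.exp (-s*u) - Real.exp (-t*u) ≤ u * Real.exp (-s*u) * (t-s) := by
  have h1 : Real.exp (-s*u) = Real.exp (-t*u) * Real.exp ((t-s)*u) := by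
    rw [← Real.exp_add]; ring_nf
  have h2 : Real.exp (-t*u) = Real.exp (-s*u) * Real.exp (-(t-s)*u) := by
    rw [← Real.exp_add]; ring_nf
  have e1 : (t-s)*u + 1 ≤ Real.exp ((t-s)*u) := Real.add_one_le_exp _
  have e2 : -(t-s)*u + 1 ≤ Real.exp (-(t-s)*u) := Real.add_one_le_exp _
  have p1 := Real.exp_pos (-t*u)
  have p2 := Real.exp_pos (-s*u)
  constructor
  · nlinarith
  · nlinarith

/-- Two-sided exponential-ratio estimate from the mean value theorem:
for `0 < a < b < c` and `u > 0`,
`((c−b)/(b−a))e^{−(c−a)u} ≤ (e^{−bu} − e^{−cu})/(e^{−au} − e^{−bu}) ≤ (c−b)/(b−a)`. -/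
theorem stmt12
    (a b c u : ℝ) (ha : 0 < a) (hab : a < b) (hbc : b < c) (hu : 0 < u) :
    (c - b) / (b - a) * Real.exp (-(c - a) * u)
        ≤ (Real.exp (-b * u) - Real.exp (-c * u)) /
            (Real.exp (-a * u) - Real.exp (-b * u)) ∧
      (Real.exp (-b * u) - Real.exp (-c * u)) /
          (Real.exp (-a * u) - Real.exp (-b * u))
        ≤ (c - b) / (b - a) := by
  obtain ⟨hab1, hab2⟩ := exp_diff_bounds a b u hab hu
  obtain ⟨hbc1, hbc2⟩ := exp_diff_bounds b c u hbc hu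
  have hden : 0 < Real.exp (-a * u) - Real.exp (-b * u) := by
    have := Real.exp_lt_exp.mpr (show -b*u < -a*u by nlinarith)
    linarith
  have hba : (0:ℝ) < b - a := by linarith
  have hE : Real.exp (-(c-a)*u) * Real.exp (-a*u) = Real.exp (-c*u) := by
    rw [← Real.exp_add]; ring_nf
  have hEpos := Real.exp_pos (-(c-a)*u)
  constructor
  · rw [div_mul_eq_mul_div, div_le_div_iff₀ hba hden]
    -- (c-b) * exp(-(c-a)u) * (exp(-au)-exp(-bu)) ≤ (exp(-bu)-exp(-cu)) * (b-a)
    have hcb : (0:ℝ) < c - b := by linarith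
    have h1 : (c-b) * Real.exp (-(c-a)*u) * (Real.exp (-a*u) - Real.exp (-b*u))
        ≤ (c-b) * Real.exp (-(c-a)*u) * (u * Real.exp (-a*u) * (b-a)) :=
      mul_le_mul_of_nonneg_left hab2 (mul_pos hcb hEpos).le
    have h3 : (c-b) * Real.exp (-(c-a)*u) * (u * Real.exp (-a*u) * (b-a))
        = u * Real.exp (-c*u) * (c-b) * (b-a) := by rw [← hE]; ring
    have h4 : u * Real.exp (-c*u) * (c-b) * (b-a)
        ≤ (Real.exp (-b*u) - Real.exp (-c*u)) * (b-a) :=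
      mul_le_mul_of_nonneg_right hbc1 hba.le
    linarith
  · rw [div_le_div_iff₀ hden hba]
    -- (exp(-bu)-exp(-cu))*(b-a) ≤ (c-b)*(exp(-au)-exp(-bu))
    have h1 : Real.exp (-b*u) - Real.exp (-c*u) ≤ u * Real.exp (-b*u) * (c-b) := hbc2
    have h2 : u * Real.exp (-b*u) * (b-a) ≤ Real.exp (-a*u) - Real.exp (-b*u) := hab1
    nlinarith [Real.exp_pos (-b*u)]
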